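/- Let q be a prime power and let t and r be fixed positive integers. Then there exists N such that for all integers n ≥ N, C_q(n, n−t, r) = (q^{(r+1)t} − 1)/(q^t − 1). -/

import Mathlib

open Module

/-- `C` is a `q`-covering design `C_q(n,k,r)`: a set of `k`-dimensional subspaces of
`F^n` such that every `r`-dimensional subspace is contained in at least one of them. -/
def IsCoveringDesign (F : Type) [Field F] (n k r : ℕ)
    (C : Finset (Submodule F (Fin n → F))) : Prop :=
  (∀ U ∈ C, finrank F ↥U = k) ∧
  ∀ W : Submodule F (Fin n → F), finrank F ↥W = r → ∃ U ∈ C, W ≤ U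

/-- `𝒞_q(n,k,r)`: the minimum size of a `q`-covering design `C_q(n,k,r)`. -/
noncomputable def minCoverSize (F : Type) [Field F] (n k r : ℕ) : ℕ :=
  sInf {M | ∃ C : Finset (Submodule F (Fin n → F)), IsCoveringDesign F n k r C ∧ C.card = M}

section Aux

open Polynomial Finset


variable (F : Type) [Field F] [Fintype F]

noncomputable def ExtField (t : ℕ) : Type :=
  SplittingField (X ^ (Fintype.card F ^ t) - X : F[X])

noncomputable instance (t : ℕ) : Field (ExtField F t) :=
  inferInstanceAs (Field (SplittingField _))

noncomputable instance (t : ℕ) : Algebra F (ExtField F t) :=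
  inferInstanceAs (Algebra F (SplittingField _))

instance (t : ℕ) : FiniteDimensional F (ExtField F t) := by
  dsimp only [ExtField]; exact inferInstanceAs (FiniteDimensional F (SplittingField (X ^ (Fintype.card F ^ t) - X : F[X])))

instance (t : ℕ) : Finite (ExtField F t) := Module.finite_of_finite F

theorem finrank_extField {t : ℕ} (ht : t ≠ 0) : finrank F (ExtField F t) = t := by
  haveI : Fintype (ExtField F t) := Fintype.ofFinite _
  set q := Fintype.card F with hqdef
  have hq : 1 < q := Fintype.one_lt_card
  obtain ⟨p, hchar⟩ := CharP.exists F
  haveI := hchar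
  obtain ⟨e, hp, hcard⟩ := FiniteField.card F p
  haveI : Fact p.Prime := ⟨hp⟩
  haveI : CharP (ExtField F t) p :=
    charP_of_injective_algebraMap (algebraMap F (ExtField F t)).injective p
  rw [← hqdef] at hcard
  have hqt : q ^ t = p ^ ((e : ℕ) * t) := by rw [hcard, ← pow_mul]
  have hpq : p ∣ q ^ t := by
    rw [hqt]
    exact dvd_pow_self p (by positivity)
  set g_poly := (X ^ q ^ t - X : F[X]) with hg
  have aux : g_poly ≠ 0 := FiniteField.X_pow_card_pow_sub_X_ne_zero _ ht hq
  have key : Fintype.card (g_poly.rootSet (ExtField F t)) = g_poly.natDegree :=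
    card_rootSet_eq_natDegree (galois_poly_separable p _ hpq)
      (SplittingField.splits g_poly)
  have nat_degree_eq : g_poly.natDegree = q ^ t :=
    FiniteField.X_pow_card_pow_sub_X_natDegree_eq _ ht hq
  rw [nat_degree_eq] at key
  suffices g_poly.rootSet (ExtField F t) = Set.univ by
    simp_rw [this, ← Fintype.ofEquiv_card (Equiv.Set.univ _)] at key
    rw [@card_eq_pow_finrank F _ _ _ _ _ (_)] at key
    exact Nat.pow_right_injective hq key
  rw [Set.eq_univ_iff_forall]
  suffices ∀ (x) (_ : x ∈ (⊤ : Subalgebra F (ExtField F t))),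
      x ∈ g_poly.rootSet (ExtField F t) by simpa
  have hadj : Algebra.adjoin F (g_poly.rootSet (ExtField F t)) = ⊤ :=
    SplittingField.adjoin_rootSet g_poly
  rw [← hadj]
  simp_rw [Algebra.mem_adjoin_iff]
  intro x hx
  have root_iff : ∀ y : ExtField F t, y ∈ g_poly.rootSet (ExtField F t) ↔ y ^ q ^ t = y := by
    intro y
    rw [mem_rootSet_of_ne aux]
    simp only [g_poly, map_sub, map_pow, aeval_X]
    rw [sub_eq_zero]
  rw [root_iff]
  refine Subring.closure_induction (p := fun y _ => y ^ q ^ t = y) ?_ ?_ ?_ ?_ ?_ ?_ hx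
  · rintro y (⟨r, rfl⟩ | hy)
    · rw [← map_pow, FiniteField.pow_card_pow]
    · rwa [root_iff] at hy
  · exact zero_pow (by positivity)
  · exact one_pow _
  · intro x y _ _ hx hy
    rw [hqt] at hx hy ⊢
    rw [add_pow_char_pow, hx, hy]
  · intro x _ hx
    rw [hqt] at hx ⊢
    rw [neg_pow, hx, neg_one_pow_char_pow, neg_one_mul]
  · intro x y _ _ hx hy
    rw [mul_pow, hx, hy]


section Dual

variable {K : Type*} [Field K] {V : Type*} [AddCommGroup V] [Module K V]

lemma dual_exists_smul {φ ψ : Module.Dual K V} (hφ : φ ≠ 0)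
    (h : LinearMap.ker φ = LinearMap.ker ψ) : ∃ c : K, c ≠ 0 ∧ c • φ = ψ := by
  have hx : ∃ x, φ x ≠ 0 := by
    by_contra hc; push_neg at hc; exact hφ (LinearMap.ext fun v => hc v)
  obtain ⟨x, hx⟩ := hx
  have hψx : ψ x ≠ 0 := by
    intro h0
    have hmem : x ∈ LinearMap.ker ψ := LinearMap.mem_ker.mpr h0
    rw [← h] at hmem
    exact hx (LinearMap.mem_ker.mp hmem)
  refine ⟨ψ x / φ x, div_ne_zero hψx hx, ?_⟩
  have htop := LinearMap.span_singleton_sup_ker_eq_top φ hx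
  ext v
  have hv : v ∈ Submodule.span K {x} ⊔ LinearMap.ker φ := htop ▸ Submodule.mem_top
  obtain ⟨a, ha, b, hb, rfl⟩ := Submodule.mem_sup.mp hv
  obtain ⟨k, rfl⟩ := Submodule.mem_span_singleton.mp ha
  have hbψ : ψ b = 0 := LinearMap.mem_ker.mp (h ▸ hb)
  have hbφ : φ b = 0 := LinearMap.mem_ker.mp hb
  simp only [LinearMap.smul_apply, map_add, map_smul, hbψ, hbφ, add_zero, smul_eq_mul]
  field_simp
  simp

lemma dual_surj {φ : Module.Dual K V} (hφ : φ ≠ 0) : Function.Surjective φ := by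
  have hx : ∃ x, φ x ≠ 0 := by
    by_contra hc; push_neg at hc; exact hφ (LinearMap.ext fun v => hc v)
  obtain ⟨x, hx⟩ := hx
  intro c
  refine ⟨(c / φ x) • x, ?_⟩
  rw [map_smul, smul_eq_mul]
  field_simp

end Dual

section Geom

lemma nat_geom (x r : ℕ) (hx : 1 ≤ x) :
    (∑ i ∈ Finset.range (r+1), x^i) * (x - 1) = x^(r+1) - 1 := by
  have h2 : 1 ≤ x^(r+1) := Nat.one_le_pow _ _ (by omega)
  zify [hx, h2]
  push_cast
  exact geom_sum_mul _ _

end Geom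

section LowerBound

variable {F : Type} [Field F] [Fintype F]



lemma sigma_pos (q t r : ℕ) (hq : 0 < q) : 0 < ∑ i ∈ Finset.range (r+1), q^(t*i) :=
  Finset.sum_pos (fun i _ => pow_pos hq _) ⟨0, by simp⟩

lemma sigma_succ (q t r : ℕ) :
    ∑ i ∈ Finset.range (r+2), q^(t*i) = 1 + q^t * ∑ i ∈ Finset.range (r+1), q^(t*i) := by
  rw [Finset.sum_range_succ' (fun i => q^(t*i)) (r+1)]
  rw [Finset.mul_sum]
  simp only [mul_zero, pow_zero]
  rw [add_comm]
  congr 1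
  refine Finset.sum_congr rfl fun i _ => ?_
  rw [← pow_add]
  congr 1
  ring

lemma greedy {n t : ℕ} (ht : 0 < t) (htn : t ≤ n) :
    ∀ (r : ℕ) (I : Finset (Submodule F (Fin n → F))) (S : Submodule F (Fin n → F)),
    (∀ U ∈ I, finrank F U = n - t) →
    (∀ U ∈ I, S ≤ U) →
    I.card < ∑ i ∈ Finset.range (r+1), (Fintype.card F)^(t*i) →
    finrank F S + r ≤ n →
    ∃ W : Submodule F (Fin n → F), S ≤ W ∧ finrank F W = finrank F S + r ∧
      ∀ U ∈ I, ¬ W ≤ U := by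
  classical
  intro r
  induction r with
  | zero =>
    intro I S _ _ hcard _
    simp only [zero_add, Finset.range_one, Finset.sum_singleton, mul_zero, pow_zero,
      Nat.lt_one_iff, Finset.card_eq_zero] at hcard
    subst hcard
    exact ⟨S, le_rfl, by simp, by simp⟩
  | succ r IH =>
    intro I S hdim hSle hcard hrank
    set q := Fintype.card F with hq
    have hq1 : 1 < q := Fintype.one_lt_card
    set s := finrank F S with hs
    obtain ⟨σ, hσ⟩ : ∃ x : ℕ, x = ∑ i ∈ Finset.range (r+1), q^(t*i) := ⟨_, rfl⟩
    have hσpos : 0 < σ := by rw [hσ]; exact sigma_pos q t r (by omega)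
    -- the candidate set
    set B : Finset (Fin n → F) := Finset.univ.filter (fun v => v ∉ S) with hB
    have hcard_sub : ∀ U : Submodule F (Fin n → F),
        (Finset.univ.filter (fun v => v ∈ U)).card = q ^ finrank F U := by
      intro U
      rw [← Fintype.card_subtype]
      exact card_eq_pow_finrank
    have hScard : (Finset.univ.filter (fun v => v ∈ S)).card = q ^ s := hcard_sub S
    have hBcard : B.card + q ^ s = q ^ n := by
      have hsplit := Finset.card_filter_add_card_filter_not
        (s := (Finset.univ : Finset (Fin n → F))) (p := fun v => v ∈ S)
      have huniv : (Finset.univ : Finset (Fin n → F)).card = q ^ n := by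
        simp [hq, Fintype.card_pi]
      rw [hB]
      omega
    have hBne : B.Nonempty := by
      rw [← Finset.card_pos]
      have h1 : q ^ s < q ^ n := Nat.pow_lt_pow_right hq1 (by omega)
      omega
    -- count of U-elements outside S
    have hcnt : ∀ U ∈ I, (B.filter (fun v => v ∈ U)).card + q ^ s = q ^ (n - t) := by
      intro U hU
      have hsub : Finset.univ.filter (fun v => v ∈ S) ⊆ Finset.univ.filter (fun v => v ∈ U) := by
        intro w hw
        simp only [Finset.mem_filter, Finset.mem_univ, true_and] at hw ⊢
        exact hSle U hU hw
      have heq : B.filter (fun v => v ∈ U)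
          = Finset.univ.filter (fun v => v ∈ U) \ Finset.univ.filter (fun v => v ∈ S) := by
        ext w
        simp only [hB, Finset.mem_filter, Finset.mem_sdiff, Finset.mem_univ, true_and]
        tauto
      rw [heq, ← hScard]
      rw [Finset.card_sdiff_add_card_eq_card hsub]
      rw [hcard_sub U, hdim U hU]
    -- choose minimizer
    set bad : (Fin n → F) → ℕ := fun v => (I.filter (fun U => v ∈ U)).card with hbad
    obtain ⟨v, hvB, hvmin⟩ := Finset.exists_min_image B bad hBne
    have hvS : v ∉ S := by
      have := hvB
      simp only [hB, Finset.mem_filter] at this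
      exact this.2
    -- double counting
    have hsum : ∑ w ∈ B, bad w = ∑ U ∈ I, (B.filter (fun v => v ∈ U)).card := by
      simp only [hbad, Finset.card_filter]
      rw [Finset.sum_comm]
    -- key bound
    have hkey : bad v < σ := by
      rcases I.eq_empty_or_nonempty with hI | ⟨U₀, hU₀⟩
      · subst hI
        simp only [hbad, Finset.filter_empty, Finset.card_empty]
        exact hσpos
      · by_contra hcon
        push_neg at hcon
        obtain ⟨D, hD⟩ : ∃ d : ℕ, d = (B.filter (fun v => v ∈ U₀)).card := ⟨_, rfl⟩
        have hDeq : ∀ U ∈ I, (B.filter (fun v => v ∈ U)).card = D := by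
          intro U hU
          have h1 := hcnt U hU
          have h2 := hcnt U₀ hU₀
          omega
        have hsum2 : ∑ w ∈ B, bad w = I.card * D := by
          rw [hsum, Finset.sum_congr rfl hDeq, Finset.sum_const, smul_eq_mul]
        have hlow : B.card * bad v ≤ ∑ w ∈ B, bad w := by
          have := Finset.card_nsmul_le_sum B bad (bad v) (fun w hw => hvmin w hw)
          simpa [smul_eq_mul] using this
        have hIcard : I.card ≤ q ^ t * σ := by
          have h9 := hcard
          rw [sigma_succ q t r, ← hσ] at h9
          omega
        have hchain : σ * B.card ≤ σ * (q ^ t * D) := by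
          calc σ * B.card ≤ bad v * B.card := Nat.mul_le_mul_right _ hcon
            _ = B.card * bad v := Nat.mul_comm _ _
            _ ≤ I.card * D := by rw [← hsum2]; exact hlow
            _ ≤ (q ^ t * σ) * D := Nat.mul_le_mul_right _ hIcard
            _ = σ * (q ^ t * D) := by ring
        have hBle : B.card ≤ q ^ t * D := Nat.le_of_mul_le_mul_left hchain hσpos
        have hst : s + t ≤ n := by
          have h1 : s ≤ finrank F U₀ := Submodule.finrank_mono (hSle U₀ hU₀)
          rw [hdim U₀ hU₀] at h1
          omega
        have hDval : q ^ t * D + q ^ t * q ^ s = q ^ n := by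
          have h2 := hcnt U₀ hU₀
          have h3 : q ^ t * (D + q ^ s) = q ^ t * q ^ (n - t) := by rw [hD, h2]
          rw [Nat.mul_add] at h3
          rw [h3, ← pow_add]
          congr 1
          omega
        have h2q : 2 * q ^ s ≤ q ^ t * q ^ s := by
          have : 2 ≤ q ^ t := by
            calc 2 ≤ q := hq1
              _ = q ^ 1 := (pow_one q).symm
              _ ≤ q ^ t := Nat.pow_le_pow_right (by omega) ht
          exact Nat.mul_le_mul_right _ this
        have hqs : 0 < q ^ s := pow_pos (by omega) _
        omega
    -- recurse
    set I' := I.filter (fun U => v ∈ U) with hI'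
    have hvne : v ≠ 0 := fun h => hvS (h ▸ S.zero_mem)
    set S' := S ⊔ (F ∙ v) with hS'
    have hS'rank : finrank F S' = s + 1 := by
      have hdisj : Disjoint S (F ∙ v) := by
        rw [Submodule.disjoint_span_singleton]
        intro h
        exact absurd h hvS
      have := Submodule.finrank_sup_add_finrank_inf_eq S (F ∙ v)
      rw [hdisj.eq_bot, finrank_bot, finrank_span_singleton hvne] at this
      rw [hS']
      omega
    have hS'le : ∀ U ∈ I', S' ≤ U := by
      intro U hU
      simp only [hI', Finset.mem_filter] at hU
      exact sup_le (hSle U hU.1) ((Submodule.span_singleton_le_iff_mem v U).mpr hU.2)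
    obtain ⟨W, hWle, hWrank, hWnot⟩ := IH I' S'
      (fun U hU => hdim U (Finset.mem_of_mem_filter U hU)) hS'le
      (by exact hσ ▸ hkey)
      (by omega)
    refine ⟨W, le_trans le_sup_left hWle, by rw [hWrank, hS'rank]; omega, ?_⟩
    intro U hU hWU
    by_cases hvU : v ∈ U
    · exact hWnot U (by simp [hI', hU, hvU]) hWU
    · exact hvU (hWU (hWle (Submodule.mem_sup_right
        (Submodule.mem_span_singleton_self v))))

end LowerBound

section UpperBound

variable {F : Type} [Field F] [Fintype F]

lemma upper {n t r : ℕ} (ht : 0 < t) (hn : (r+1)*t ≤ n) :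
    ∃ C : Finset (Submodule F (Fin n → F)),
      ((∀ U ∈ C, finrank F ↥U = n - t) ∧
        ∀ W : Submodule F (Fin n → F), finrank F ↥W = r → ∃ U ∈ C, W ≤ U) ∧
      C.card * ((Fintype.card F)^t - 1) = (Fintype.card F)^(t*(r+1)) - 1 := by
  classical
  set q := Fintype.card F with hq
  have hq1 : 1 < q := Fintype.one_lt_card
  set K := ExtField F t with hK
  have hKrank : finrank F K = t := finrank_extField F (by omega)
  letI : Fintype K := Fintype.ofFinite K
  have hcardK : Fintype.card K = q ^ t := by
    rw [card_eq_pow_finrank (K := F) (V := K), hKrank]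
  set V := Fin (r+1) → K with hV
  haveI : FiniteDimensional F K := inferInstance
  haveI : FiniteDimensional K V := inferInstance
  haveI : FiniteDimensional F V := Module.Finite.trans (R := F) K V
  have hVrankK : finrank K V = r + 1 := Module.finrank_fin_fun K
  have hVrankF : finrank F V = (r+1) * t := by
    rw [← Module.finrank_mul_finrank F K V, hKrank, hVrankK]; ring
  -- the surjection π : F^n → V
  set E := (Fin n → F) with hE
  have hErank : finrank F E = n := Module.finrank_fin_fun F
  set R := (Fin (n - (r+1)*t) → F) with hR
  have hVR : finrank F E = finrank F (V × R) := by
    rw [hErank, Module.finrank_prod, hVrankF, Module.finrank_fin_fun]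
    omega
  obtain ⟨e⟩ := FiniteDimensional.nonempty_linearEquiv_of_finrank_eq hVR
  set π : E →ₗ[F] V := (LinearMap.fst F V R).comp e.toLinearMap with hπ
  have hπsurj : Function.Surjective π := by
    intro v
    exact ⟨e.symm (v, 0), by simp [hπ]⟩
  -- the design
  set Uof : Module.Dual K V → Submodule F E :=
    fun φ => LinearMap.ker ((φ.restrictScalars F).comp π) with hUof
  have hUof_mem : ∀ φ (x : E), x ∈ Uof φ ↔ φ (π x) = 0 := by
    intro φ x
    simp [hUof, LinearMap.mem_ker]
  have hUof_rank : ∀ φ : Module.Dual K V, φ ≠ 0 → finrank F ↥(Uof φ) = n - t := by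
    intro φ hφ
    set g := (φ.restrictScalars F).comp π with hg
    have hgsurj : Function.Surjective g := by
      intro c
      obtain ⟨v, hv⟩ := dual_surj hφ c
      obtain ⟨x, hx⟩ := hπsurj v
      exact ⟨x, by simp [hg, hx, hv]⟩
    have h1 := LinearMap.finrank_range_add_finrank_ker g
    rw [LinearMap.range_eq_top.mpr hgsurj, finrank_top, hErank] at h1
    have h3 : Uof φ = LinearMap.ker g := rfl
    rw [h3]
    omega
  have hUof_smul : ∀ (c : K) (φ : Module.Dual K V), c ≠ 0 → Uof (c • φ) = Uof φ := by
    intro c φ hc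
    ext x
    rw [hUof_mem, hUof_mem]
    simp [smul_eq_mul, hc]
  have hUof_ker : ∀ φ ψ : Module.Dual K V, Uof φ = Uof ψ →
      LinearMap.ker φ = LinearMap.ker ψ := by
    intro φ ψ h
    ext v
    obtain ⟨x, rfl⟩ := hπsurj v
    constructor <;> intro hv
    · have : x ∈ Uof φ := (hUof_mem φ x).mpr hv
      rw [h] at this
      exact (hUof_mem ψ x).mp this
    · have : x ∈ Uof ψ := (hUof_mem ψ x).mpr hv
      rw [← h] at this
      exact (hUof_mem φ x).mp this
  -- counting
  haveI : Finite (Module.Dual K V) :=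
    Finite.of_injective _ DFunLike.coe_injective
  letI : Fintype (Module.Dual K V) := Fintype.ofFinite _
  have hcardDual : Fintype.card (Module.Dual K V) = (q^t)^(r+1) := by
    rw [card_eq_pow_finrank (K := K) (V := Module.Dual K V), hcardK,
      Subspace.dual_finrank_eq, hVrankK]
  set D : Finset (Module.Dual K V) := Finset.univ.filter (fun φ => φ ≠ 0) with hD
  have hDcard : D.card = (q^t)^(r+1) - 1 := by
    have : D = Finset.univ.erase 0 := by
      ext φ; simp [hD, Ne, eq_comm]
    rw [this, Finset.card_erase_of_mem (Finset.mem_univ _), Finset.card_univ, hcardDual]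
  set C : Finset (Submodule F E) := D.image Uof with hC
  refine ⟨C, ⟨?_, ?_⟩, ?_⟩
  · intro U hU
    obtain ⟨φ, hφ, rfl⟩ := Finset.mem_image.mp hU
    exact hUof_rank φ (by simpa [hD] using hφ)
  · -- covering
    intro W hW
    -- image of W spans a ≤ r dimensional K-subspace
    have hWfd : FiniteDimensional F ↥W := inferInstance
    set b := Module.finBasis F ↥W with hb
    set f : Fin (finrank F ↥W) → V := fun i => π (W.subtype (b i)) with hf
    set SK : Submodule K V := Submodule.span K (Set.range f) with hSK
    have hSKrank : finrank K SK ≤ r := by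
      have h1 : finrank K SK ≤ (Set.toFinset (Set.range f)).card :=
        finrank_span_le_card (Set.range f)
      have h2 : (Set.toFinset (Set.range f)).card ≤ finrank F ↥W := by
        rw [Set.toFinset_range]
        exact (Finset.card_image_le).trans (by simp)
      omega
    have hSKne : SK ≠ ⊤ := by
      intro hcon
      have := finrank_top K V
      rw [← hcon] at this
      omega
    obtain ⟨φ, hφ0, hφmap⟩ :=
      Submodule.exists_dual_map_eq_bot_of_lt_top (lt_top_iff_ne_top.mpr hSKne) inferInstance
    have hWU : W ≤ Uof φ := by
      intro x hx
      rw [hUof_mem]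
      have hmem : π x ∈ SK := by
        have hx2 : (⟨x, hx⟩ : ↥W) ∈ (⊤ : Submodule F ↥W) := Submodule.mem_top
        rw [← b.span_eq] at hx2
        have hx3 : x ∈ Submodule.span F (Set.range (W.subtype ∘ b)) := by
          have := Submodule.map_span W.subtype (Set.range b)
          rw [Set.range_comp]
          rw [← this]
          exact Submodule.mem_map_of_mem hx2
        have hx4 : π x ∈ Submodule.span F (Set.range (π ∘ W.subtype ∘ b)) := by
          have := Submodule.map_span π (Set.range (W.subtype ∘ b))
          rw [Set.range_comp π]
          rw [← this]
          exact Submodule.mem_map_of_mem hx3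
        have hx5 : Submodule.span F (Set.range (π ∘ W.subtype ∘ b)) ≤
            (Submodule.span K (Set.range (π ∘ W.subtype ∘ b))).restrictScalars F :=
          Submodule.span_le_restrictScalars F K _
        have hx6 := hx5 hx4
        rw [Submodule.restrictScalars_mem] at hx6
        exact hx6
      have : φ (π x) ∈ Submodule.map φ SK := Submodule.mem_map_of_mem hmem
      rw [hφmap] at this
      exact (Submodule.mem_bot K).mp this
    exact ⟨Uof φ, Finset.mem_image_of_mem Uof (by simp [hD, hφ0]), hWU⟩
  · -- cardinality
    have hfiber : ∀ U ∈ C, (D.filter (fun ψ => Uof ψ = U)).card = q^t - 1 := by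
      intro U hU
      obtain ⟨φ, hφD, rfl⟩ := Finset.mem_image.mp hU
      have hφ0 : φ ≠ 0 := by simpa [hD] using hφD
      have himg : D.filter (fun ψ => Uof ψ = Uof φ)
          = (Finset.univ.filter (fun c : K => c ≠ 0)).image (fun c => c • φ) := by
        ext ψ
        simp only [hD, Finset.mem_filter, Finset.mem_image, Finset.mem_univ, true_and]
        constructor
        · rintro ⟨hψ0, hker⟩
          obtain ⟨c, hc0, hc⟩ := dual_exists_smul hφ0 (hUof_ker φ ψ hker.symm)
          exact ⟨c, hc0, hc⟩
        · rintro ⟨c, hc0, rfl⟩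
          exact ⟨smul_ne_zero hc0 hφ0, hUof_smul c φ hc0⟩
      rw [himg, Finset.card_image_of_injective _ (smul_left_injective K hφ0)]
      have herase : Finset.univ.filter (fun c : K => c ≠ 0) = Finset.univ.erase 0 := by
        ext c; simp [Ne, eq_comm]
      rw [herase, Finset.card_erase_of_mem (Finset.mem_univ _), Finset.card_univ, hcardK]
    have := Finset.card_eq_sum_card_image Uof D
    rw [← hC] at this
    rw [Finset.sum_congr rfl hfiber, Finset.sum_const, smul_eq_mul] at this
    rw [hDcard, ← pow_mul] at this
    exact this.symm

end UpperBound

end Aux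

/-- **Theorem (covering for large `k`).** For fixed positive `t`, `r`, and all
sufficiently large `n`, `𝒞_q(n, n-t, r) = (q^((r+1)t)-1)/(q^t-1)`. -/
theorem covering_large_k (F : Type) [Field F] [Fintype F] (t r : ℕ)
    (ht : 0 < t) (hr : 0 < r) :
    ∃ N : ℕ, ∀ n : ℕ, N ≤ n →
      (minCoverSize F n (n - t) r : ℝ) =
        ((Fintype.card F : ℝ) ^ ((r + 1) * t) - 1) / ((Fintype.card F : ℝ) ^ t - 1) := by
  refine ⟨(r+1)*t, fun n hn => ?_⟩
  set q := Fintype.card F with hq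
  have hq1 : 1 < q := Fintype.one_lt_card
  have htn : t ≤ n := le_trans (by nlinarith) hn
  have hrn : r ≤ n := le_trans (by nlinarith) hn
  set σ := ∑ i ∈ Finset.range (r+1), q^(t*i) with hσ
  -- geometric sum identity
  have hgeom : σ * (q^t - 1) = q^(t*(r+1)) - 1 := by
    have := nat_geom (q^t) r (Nat.one_le_pow _ _ (by omega))
    rw [hσ]
    simp_rw [pow_mul]
    rw [this, ← pow_mul]
  -- the design from `upper`
  obtain ⟨C, hC, hCcard⟩ := upper (F := F) ht hn
  have hCσ : C.card = σ := by
    have hpos : 0 < q^t - 1 := by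
      have : 2 ≤ q^t := by
        calc 2 ≤ q := hq1
          _ = q^1 := (pow_one q).symm
          _ ≤ q^t := Nat.pow_le_pow_right (by omega) ht
      omega
    exact Nat.eq_of_mul_eq_mul_right hpos (by rw [hCcard, hgeom])
  -- lower bound
  have hlow : ∀ M ∈ {M | ∃ C : Finset (Submodule F (Fin n → F)),
      IsCoveringDesign F n (n-t) r C ∧ C.card = M}, σ ≤ M := by
    rintro M ⟨C', ⟨hdim, hcov⟩, rfl⟩
    by_contra hcon
    push_neg at hcon
    rw [hσ] at hcon
    obtain ⟨W, _, hWrank, hWnot⟩ := greedy ht htn r C' ⊥ hdim (fun U _ => bot_le)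
      hcon (by rw [finrank_bot]; omega)
    rw [finrank_bot, zero_add] at hWrank
    obtain ⟨U, hU, hWU⟩ := hcov W hWrank
    exact hWnot U hU hWU
  have hmem : C.card ∈ {M | ∃ C : Finset (Submodule F (Fin n → F)),
      IsCoveringDesign F n (n-t) r C ∧ C.card = M} := ⟨C, ⟨hC.1, hC.2⟩, rfl⟩
  have hmin : minCoverSize F n (n-t) r = σ := by
    refine le_antisymm ?_ ?_
    · exact le_trans (Nat.sInf_le hmem) (le_of_eq hCσ)
    · exact le_csInf ⟨C.card, hmem⟩ hlow
  rw [hmin]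
  -- cast to ℝ
  have hq1R : (1 : ℝ) < (q : ℝ)^t := by
    have : (1:ℝ) < (q:ℝ) := by exact_mod_cast hq1
    exact one_lt_pow₀ this (by omega)
  rw [eq_div_iff (by linarith)]
  have hcast := congrArg (Nat.cast (R := ℝ)) hgeom
  have h1 : (1:ℕ) ≤ q^t := Nat.one_le_pow _ _ (by omega)
  have h2 : (1:ℕ) ≤ q^(t*(r+1)) := Nat.one_le_pow _ _ (by omega)
  push_cast [h1, h2] at hcast
  rw [mul_comm (r+1) t]
  exact hcast
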